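/- If G is an existentially closed group and G ≡ᵇᶠ_2 H, then H is existentially closed. -/

import Mathlib

/-- Tuples `g` and `h` satisfy the same group-word equations (equal quantifier-free types). -/
def WordEq {ι : Type*} (G H : Type*) [Group G] [Group H]
    (g : ι → G) (h : ι → H) : Prop :=
  ∀ w : FreeGroup ι, FreeGroup.lift g w = 1 ↔ FreeGroup.lift h w = 1

/-- The standard symmetric back-and-forth relation of rank `α` between groups with
distinguished tuples. -/
def GBF (G H : Type*) [Group G] [Group H]
    (α : Ordinal) (n : ℕ) (g : Fin n → G) (h : Fin n → H) : Prop :=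
  (α = 0 ∧ WordEq G H g h) ∨
  (α ≠ 0 ∧
    (∀ β < α, ∀ (m : ℕ) (c : Fin m → G), ∃ d : Fin m → H,
      GBF G H β (n + m) (Fin.append g c) (Fin.append h d)) ∧
    (∀ β < α, ∀ (m : ℕ) (d : Fin m → H), ∃ c : Fin m → G,
      GBF G H β (n + m) (Fin.append g c) (Fin.append h d)))
termination_by α

/-- A group `G` is existentially closed: any finite system of equations and inequations
with parameters from `G` that has a solution in some group extending `G` already has a
solution in `G`. -/
def IsECGroup (G : Type u) [Group G] : Prop :=
  ∀ (K : Type u) (_ : Group K) (f : G →* K), Function.Injective f →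
    ∀ (n m : ℕ) (par : Fin n → G) (E I : Finset (FreeGroup (Fin n ⊕ Fin m))),
      (∃ x : Fin m → K,
        (∀ w ∈ E, FreeGroup.lift (Sum.elim (f ∘ par) x) w = 1) ∧
        (∀ w ∈ I, FreeGroup.lift (Sum.elim (f ∘ par) x) w ≠ 1)) →
      (∃ x : Fin m → G,
        (∀ w ∈ E, FreeGroup.lift (Sum.elim par x) w = 1) ∧
        (∀ w ∈ I, FreeGroup.lift (Sum.elim par x) w ≠ 1))

section Aux

open Monoid

private lemma lift_map_eq {α β G : Type*} [Group G] (ρ : α → β) (g : β → G) (w : FreeGroup α) :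
    FreeGroup.lift g (FreeGroup.map ρ w) = FreeGroup.lift (g ∘ ρ) w := by
  have : (FreeGroup.lift g).comp (FreeGroup.map ρ) = FreeGroup.lift (g ∘ ρ) :=
    FreeGroup.ext_hom _ _ (by simp)
  exact DFunLike.congr_fun this w

private lemma comp_lift_eq {α G K : Type*} [Group G] [Group K] (f : G →* K) (g : α → G)
    (w : FreeGroup α) : FreeGroup.lift (f ∘ g) w = f (FreeGroup.lift g w) := by
  have : FreeGroup.lift (f ∘ g) = f.comp (FreeGroup.lift g) :=
    FreeGroup.ext_hom _ _ (by simp)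
  exact DFunLike.congr_fun this w

@[reducible] private def Fam (G B : Type u) : Bool → Type u := fun b => Bool.rec B G b

private instance famGroup {G B : Type u} [Group G] [Group B] (b : Bool) : Group (Fam G B b) :=
  Bool.rec (inferInstanceAs (Group B)) (inferInstanceAs (Group G)) b

private def famHom {A : Type u} [Group A] {G B : Type u} [Group G] [Group B]
    (φG : A →* G) (φB : A →* B) : ∀ b, A →* Fam G B b :=
  fun b => Bool.rec (motive := fun b => A →* Fam G B b) φB φG b

private lemma exists_amalgam {A : Type u} [Group A] {G B : Type u} [Group G] [Group B]
    (φG : A →* G) (φB : A →* B) (hG : Function.Injective φG) (hB : Function.Injective φB) :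
    ∃ (L : Type u) (_ : Group L) (iG : G →* L) (iB : B →* L),
      Function.Injective iG ∧ Function.Injective iB ∧ iG.comp φG = iB.comp φB := by
  have hinj : ∀ b, Function.Injective (famHom φG φB b) := by
    intro b; cases b
    · exact hB
    · exact hG
  refine ⟨PushoutI (famHom φG φB), inferInstance,
    PushoutI.of (φ := famHom φG φB) true, PushoutI.of (φ := famHom φG φB) false,
    PushoutI.of_injective hinj true, PushoutI.of_injective hinj false, ?_⟩
  show (PushoutI.of true).comp (famHom φG φB true) = (PushoutI.of false).comp (famHom φG φB false)
  rw [PushoutI.of_comp_eq_base, PushoutI.of_comp_eq_base]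

/-- The amalgamation step: if the tuple `c` in `G` satisfies exactly the same word equations
as the "parameter part" of the tuple `t` in `K`, then there is a group `L` extending `G`
(in the same universe as `G`) containing a copy of the whole tuple `t` over `c`. -/
private lemma exists_extension {G : Type u} [Group G] {K : Type v} [Group K]
    {n m : ℕ} (c : Fin n → G) (t : Fin n ⊕ Fin m → K)
    (hcp : ∀ w : FreeGroup (Fin n),
      FreeGroup.lift c w = 1 ↔ FreeGroup.lift (t ∘ Sum.inl) w = 1) :
    ∃ (L : Type u) (_ : Group L) (iG : G →* L) (X : Fin m → L),
      Function.Injective iG ∧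
      ∀ w : FreeGroup (Fin n ⊕ Fin m),
        FreeGroup.lift (Sum.elim (iG ∘ c) X) w = 1 ↔ FreeGroup.lift t w = 1 := by
  classical
  set e' : FreeGroup (Fin n ⊕ Fin m) →* K := FreeGroup.lift t with he'
  have hker : ∀ w : FreeGroup (Fin n),
      FreeGroup.map Sum.inl w ∈ e'.ker ↔ w ∈ (FreeGroup.lift c).ker := by
    intro w
    rw [MonoidHom.mem_ker, MonoidHom.mem_ker, he', lift_map_eq]
    exact (hcp w).symm
  -- the marked subgroup `A` generated by `c`, resp. by the parameter part of `t`
  set A : Type := FreeGroup (Fin n) ⧸ (FreeGroup.lift c).ker with hA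
  set φG : A →* G := QuotientGroup.kerLift (FreeGroup.lift c) with hφGdef
  have hφG : Function.Injective φG := QuotientGroup.kerLift_injective _
  -- the finitely generated subgroup of `K` generated by the tuple `t`, as a small group
  set W : Type := FreeGroup (Fin n ⊕ Fin m) ⧸ e'.ker with hW
  set mkW : FreeGroup (Fin n ⊕ Fin m) →* W := QuotientGroup.mk' e'.ker with hmkW
  have hWone : ∀ w : FreeGroup (Fin n ⊕ Fin m), mkW w = 1 ↔ e' w = 1 := by
    intro w
    rw [hmkW, QuotientGroup.mk'_apply, QuotientGroup.eq_one_iff, MonoidHom.mem_ker]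
  set φW : A →* W := QuotientGroup.map _ _ (FreeGroup.map Sum.inl)
      (by intro w hw; exact (hker w).2 hw) with hφWdef
  have hφWmk : ∀ w : FreeGroup (Fin n),
      φW (QuotientGroup.mk w) = mkW (FreeGroup.map Sum.inl w) := by
    intro w
    rw [hφWdef]
    rfl
  have hφW : Function.Injective φW := by
    rw [injective_iff_map_eq_one]
    intro a ha
    obtain ⟨w, rfl⟩ := QuotientGroup.mk_surjective a
    rw [hφWmk, hWone] at ha
    rw [QuotientGroup.eq_one_iff, MonoidHom.mem_ker]
    exact ((hker w).1 ha)
  -- lift to universe `u` and amalgamate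
  obtain ⟨L, instL, iG, iB, hiG, hiB, hcomp⟩ :=
    exists_amalgam (A := ULift.{u} A) (B := ULift.{u} W)
      (φG.comp MulEquiv.ulift.toMonoidHom)
      ((MulEquiv.ulift.symm.toMonoidHom.comp φW).comp MulEquiv.ulift.toMonoidHom)
      (by
        rw [MonoidHom.coe_comp]
        exact hφG.comp (MulEquiv.ulift.injective))
      (by
        rw [MonoidHom.coe_comp, MonoidHom.coe_comp]
        exact (MulEquiv.ulift.symm.injective.comp hφW).comp MulEquiv.ulift.injective)
  refine ⟨L, instL, iG, fun i => iB (MulEquiv.ulift.symm (mkW (FreeGroup.of (Sum.inr i)))),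
    hiG, ?_⟩
  have hcompa : ∀ a : A, iG (φG a) = iB (MulEquiv.ulift.symm (φW a)) := by
    intro a
    have := DFunLike.congr_fun hcomp (MulEquiv.ulift.symm a)
    simpa using this
  have huW : Function.Injective fun w : W => iB (MulEquiv.ulift.symm w) :=
    hiB.comp (MulEquiv.ulift.symm.injective)
  have hlift : FreeGroup.lift
      (Sum.elim (iG ∘ c) (fun i => iB (MulEquiv.ulift.symm (mkW (FreeGroup.of (Sum.inr i))))))
      = (iB.comp (MulEquiv.ulift.symm.toMonoidHom : W →* ULift.{u} W)).comp mkW := by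
    apply FreeGroup.ext_hom
    rintro (i | i)
    · simp only [FreeGroup.lift_apply_of, Sum.elim_inl, Function.comp_apply, MonoidHom.comp_apply]
      have h1 : φG (QuotientGroup.mk (FreeGroup.of i)) = c i := by
        rw [hφGdef, QuotientGroup.kerLift_mk, FreeGroup.lift_apply_of]
      rw [← h1, hcompa, hφWmk, FreeGroup.map.of]
      rfl
    · simp only [FreeGroup.lift_apply_of, Sum.elim_inr, MonoidHom.comp_apply]
      rfl
  intro w
  rw [DFunLike.congr_fun hlift w]
  constructor
  · intro h
    have : mkW w = 1 := by
      apply huW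
      simpa using h
    rw [hWone] at this
    exact this
  · intro h
    have : mkW w = 1 := (hWone w).2 h
    simp [MonoidHom.comp_apply, this]

end Aux

/-- If `G` is existentially closed and `G ≡ᵇᶠ_2 H`, then `H` is existentially closed. -/
theorem isECGroup_of_gbf_two {G : Type u} {H : Type v} [Group G] [Group H]
    (hG : IsECGroup G)
    (h2 : GBF G H 2 0 (fun i => i.elim0) (fun i => i.elim0)) :
    IsECGroup H := by
  intro K instK f hf n m par E I hsol
  obtain ⟨x, hxE, hxI⟩ := hsol
  rw [GBF] at h2
  rcases h2 with ⟨h20, -⟩ | ⟨-, -, hback⟩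
  · exact absurd h20 (by norm_num)
  -- back: find a tuple `c` in `G` matching `par`
  obtain ⟨c, hc1⟩ := hback 1 (by norm_num) n par
  rw [GBF] at hc1
  rcases hc1 with ⟨h10, -⟩ | ⟨-, hforth, hback1⟩
  · exact absurd h10 (by norm_num)
  -- `c` and `par` satisfy the same word equations
  obtain ⟨c0, hc0⟩ := hback1 0 (by norm_num) 0 (fun i => i.elim0)
  rw [GBF] at hc0
  rcases hc0 with ⟨-, hweq0⟩ | ⟨h00, -⟩
  swap
  · exact absurd rfl h00
  have hcp : ∀ w : FreeGroup (Fin n), FreeGroup.lift c w = 1 ↔ FreeGroup.lift par w = 1 := by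
    intro w
    have hl : (Fin.append (Fin.append (fun i => i.elim0) c) c0) ∘
        (fun i => Fin.castAdd 0 (Fin.natAdd 0 i)) = c := by
      funext i
      show Fin.append (Fin.append _ c) c0 (Fin.castAdd 0 (Fin.natAdd 0 i)) = c i
      rw [Fin.append_left, Fin.append_right]
    have hr : (Fin.append (Fin.append (fun i => i.elim0) par) (fun i => i.elim0)) ∘
        (fun i => Fin.castAdd 0 (Fin.natAdd 0 i)) = par := by
      funext i
      show Fin.append (Fin.append _ par) _ (Fin.castAdd 0 (Fin.natAdd 0 i)) = par i
      rw [Fin.append_left, Fin.append_right]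
    have := hweq0 (FreeGroup.map (fun i => Fin.castAdd 0 (Fin.natAdd 0 i)) w)
    rwa [lift_map_eq, lift_map_eq, hl, hr] at this
  -- build an extension of `G` containing a solution over `c`
  obtain ⟨L, instL, iG, X, hiG, hiff⟩ :=
    exists_extension (K := K) c (Sum.elim (f ∘ par) x) (by
      intro w
      rw [hcp w]
      have : (Sum.elim (f ∘ par) x ∘ Sum.inl) = f ∘ par := rfl
      rw [this, comp_lift_eq]
      exact ⟨fun h => by rw [h, map_one], fun h => hf (by rwa [map_one])⟩)
  -- use that `G` is existentially closed
  obtain ⟨y, hyE, hyI⟩ := hG L instL iG hiG n m c E I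
    ⟨X, fun w hw => (hiff w).2 (hxE w hw), fun w hw h1 => hxI w hw ((hiff w).1 h1)⟩
  -- forth: find a tuple `d` in `H` matching `y`
  obtain ⟨d, hd⟩ := hforth 0 (by norm_num) m y
  rw [GBF] at hd
  rcases hd with ⟨-, hweq⟩ | ⟨h00, -⟩
  swap
  · exact absurd rfl h00
  have htrans : ∀ w : FreeGroup (Fin n ⊕ Fin m),
      FreeGroup.lift (Sum.elim c y) w = 1 ↔ FreeGroup.lift (Sum.elim par d) w = 1 := by
    intro w
    have hl : (Fin.append (Fin.append (fun i => i.elim0) c) y) ∘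
        (Sum.elim (fun i => Fin.castAdd m (Fin.natAdd 0 i)) (fun j => Fin.natAdd (0 + n) j))
        = Sum.elim c y := by
      funext i
      rcases i with i | j
      · show Fin.append (Fin.append _ c) y (Fin.castAdd m (Fin.natAdd 0 i)) = c i
        rw [Fin.append_left, Fin.append_right]
      · show Fin.append (Fin.append _ c) y (Fin.natAdd (0 + n) j) = y j
        rw [Fin.append_right]
    have hr : (Fin.append (Fin.append (fun i => i.elim0) par) d) ∘
        (Sum.elim (fun i => Fin.castAdd m (Fin.natAdd 0 i)) (fun j => Fin.natAdd (0 + n) j))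
        = Sum.elim par d := by
      funext i
      rcases i with i | j
      · show Fin.append (Fin.append _ par) d (Fin.castAdd m (Fin.natAdd 0 i)) = par i
        rw [Fin.append_left, Fin.append_right]
      · show Fin.append (Fin.append _ par) d (Fin.natAdd (0 + n) j) = d j
        rw [Fin.append_right]
    have := hweq (FreeGroup.map
      (Sum.elim (fun i => Fin.castAdd m (Fin.natAdd 0 i)) (fun j => Fin.natAdd (0 + n) j)) w)
    rwa [lift_map_eq, lift_map_eq, hl, hr] at this
  exact ⟨d, fun w hw => (htrans w).1 (hyE w hw),
    fun w hw h1 => hyI w hw ((htrans w).2 h1)⟩
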